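/- For all integers n ≥ 10 and 1 ≤ m ≤ √10 · n^{5/2} and every probability distribution D in D_4(n,m), E_{C∼D}[ m̃(C)⁴ ] ≥ m⁴ − (125/6)·m³·n², where m̃(C) denotes the number of pairwise distinct clauses occurring in C. -/

import Mathlib

open scoped Classical

/-- A literal over `n` Boolean variables: a (variable, sign) pair. -/
abbrev Lit (n : ℕ) := Fin n × Bool

/-- A clause: a set of three literals whose three variables are pairwise distinct. -/
abbrev Clause (n : ℕ) :=
  {s : Finset (Lit n) // s.card = 3 ∧ (s.image Prod.fst).card = 3}

/-- A 3-SAT instance: a sequence of `m` clauses over `n` variables. -/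
abbrev SatInstance (n m : ℕ) := Fin m → Clause n

/-- The assignment `σ` makes at least one literal of clause `c` true. -/
def Satisfies {n : ℕ} (σ : Fin n → Bool) (c : Clause n) : Prop :=
  ∃ ℓ ∈ c.1, σ ℓ.1 = ℓ.2

/-- The instance `C` is satisfiable. -/
def SAT {n m : ℕ} (C : SatInstance n m) : Prop :=
  ∃ σ : Fin n → Bool, ∀ i, Satisfies σ (C i)

/-- Probability of the event `P` under the distribution (weight function) `D`. -/
noncomputable def pr {α : Type*} [Fintype α] (D : α → ℝ) (P : α → Prop) : ℝ :=
  ∑ a ∈ Finset.univ.filter P, D a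

/-- `D` is a probability distribution on the finite type `α`. -/
def IsDistribution {α : Type*} [Fintype α] (D : α → ℝ) : Prop :=
  (∀ a, 0 ≤ D a) ∧ ∑ a, D a = 1

/-- The clauses of a random instance drawn from `D` are `k`-wise independent with
uniform marginals: any `k` clauses at distinct positions are jointly uniform,
each over the `M = 8 * (n choose 3)` possible clauses.
`IsDistribution D ∧ KWiseUniform n m k D` says `D ∈ 𝔇_k(n,m)`. -/
def KWiseUniform (n m k : ℕ) (D : SatInstance n m → ℝ) : Prop :=
  ∀ idx : Fin k → Fin m, Function.Injective idx →
    ∀ t : Fin k → Clause n,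
      pr D (fun C => ∀ j, C (idx j) = t j) = (1 / (8 * (n.choose 3 : ℝ))) ^ k

/-- `ξ(C)`: the number of unordered pairs `{i, j}` with `i ≠ j` and `c_i = c_j`. -/
noncomputable def xi {n m : ℕ} (C : SatInstance n m) : ℕ :=
  (Finset.univ.filter fun p : Fin m × Fin m => p.1 < p.2 ∧ C p.1 = C p.2).card

/-- An edge index of the bipartite multigraph `G(C)`: a clause position together with the
literal serving as the right endpoint (the left endpoint is the remaining literal pair). -/
abbrev EdgeIdx (n m : ℕ) := Fin m × Lit n

/-- `e` is an actual edge of the multigraph `G(C)`. -/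
def isEdge {n m : ℕ} (C : SatInstance n m) (e : EdgeIdx n m) : Prop :=
  e.2 ∈ (C e.1).1

/-- The left endpoint (pair of literals) of the edge `e` of `G(C)`. -/
def leftV {n m : ℕ} (C : SatInstance n m) (e : EdgeIdx n m) : Finset (Lit n) :=
  (C e.1).1.erase e.2

/-- `s` is a `K_{2,2}`-edge-set of the multigraph `G(C)`: four edges of the form
`u–v, u–v', u'–v, u'–v'` with `u ≠ u'` and `v ≠ v'`. -/
def IsK22 {n m : ℕ} (C : SatInstance n m) (s : Finset (EdgeIdx n m)) : Prop :=
  s.card = 4 ∧ (∀ e ∈ s, isEdge C e) ∧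
  ∃ u u' : Finset (Lit n), ∃ v v' : Lit n, u ≠ u' ∧ v ≠ v' ∧
    s.image (fun e => (leftV C e, e.2)) = {(u, v), (u, v'), (u', v), (u', v')}

/-- `κ(C)`: the number of `K_{2,2}`-edge-sets of the multigraph `G(C)`. -/
noncomputable def kappa {n m : ℕ} (C : SatInstance n m) : ℕ :=
  (Finset.univ.filter fun s : Finset (EdgeIdx n m) => IsK22 C s).card

/-- Adjacency in the simple bipartite graph `G(C̃)` of a set `T` of distinct clauses:
the literal pair `u` is adjacent to the literal `v`. -/
def adjSet {n : ℕ} (T : Finset (Clause n)) (u : Finset (Lit n)) (v : Lit n) : Prop :=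
  v ∉ u ∧ ∃ c ∈ T, c.1 = insert v u

/-- `κ(C̃)` for a set `T` of pairwise distinct clauses: the number of `K_{2,2}` subgraphs of
the simple bipartite graph `G(C̃)`, computed as `Σ_{{v,v'}} binom(|B_{v,v'}|, 2)`. -/
noncomputable def kappaSet {n : ℕ} (T : Finset (Clause n)) : ℕ :=
  ∑ p ∈ (Finset.univ : Finset (Lit n)).powersetCard 2,
    ((Finset.univ.filter fun u : Finset (Lit n) => ∀ v ∈ p, adjSet T u v).card).choose 2

/-- `m̃(C)`: the number of pairwise distinct clauses occurring in `C`. -/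
noncomputable def distinctCount {n m : ℕ} (C : SatInstance n m) : ℕ :=
  (Finset.univ.image C).card

/-- The set of the three variables of a clause. -/
def clVars {n : ℕ} (c : Clause n) : Finset (Fin n) := c.1.image Prod.fst

/-- `f` lists (the indices of) hyperedges of the variable hypergraph of `C` forming a
Berge path: consecutive hyperedges share exactly one vertex, non-consecutive ones
are disjoint. -/
def IsBergePathOrder {n m : ℕ} (C : SatInstance n m) {k : ℕ} (f : Fin k → Fin m) : Prop :=
  Function.Injective f ∧
  (∀ i j : Fin k, (j : ℕ) = (i : ℕ) + 1 →
    (clVars (C (f i)) ∩ clVars (C (f j))).card = 1) ∧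
  (∀ i j : Fin k, i ≠ j → (j : ℕ) ≠ (i : ℕ) + 1 → (i : ℕ) ≠ (j : ℕ) + 1 →
    Disjoint (clVars (C (f i))) (clVars (C (f j))))

/-- `j` follows `i` cyclically in `Fin ℓ`. -/
def CycConsec (ℓ : ℕ) (i j : Fin ℓ) : Prop := (j : ℕ) = ((i : ℕ) + 1) % ℓ

/-- `f` lists (the indices of) hyperedges of the variable hypergraph of `C` forming a
Berge cycle (of length `ℓ ≥ 3`): cyclically consecutive hyperedges share exactly one
vertex, non-consecutive ones are disjoint. -/
def IsBergeCycleOrder {n m : ℕ} (C : SatInstance n m) {ℓ : ℕ} (f : Fin ℓ → Fin m) : Prop :=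
  Function.Injective f ∧
  (∀ i j : Fin ℓ, CycConsec ℓ i j →
    (clVars (C (f i)) ∩ clVars (C (f j))).card = 1) ∧
  (∀ i j : Fin ℓ, i ≠ j → ¬ CycConsec ℓ i j → ¬ CycConsec ℓ j i →
    Disjoint (clVars (C (f i))) (clVars (C (f j))))

/-- The number of `k`-element sets of hyperedge indices of the variable hypergraph of `C`
that form a Berge path of length `k`. -/
noncomputable def bergePathSetCount (n m k : ℕ) (C : SatInstance n m) : ℕ :=
  (Finset.univ.filter fun s : Finset (Fin m) =>
    s.card = k ∧ ∃ f : Fin k → Fin m, (∀ i, f i ∈ s) ∧ IsBergePathOrder C f).card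

/-- The number of `ℓ`-element sets of hyperedge indices of the variable hypergraph of `C`
that form a Berge cycle of length `ℓ`. -/
noncomputable def bergeCycleSetCount (n m ℓ : ℕ) (C : SatInstance n m) : ℕ :=
  (Finset.univ.filter fun s : Finset (Fin m) =>
    s.card = ℓ ∧ ∃ f : Fin ℓ → Fin m, (∀ i, f i ∈ s) ∧ IsBergeCycleOrder C f).card


lemma pr_congr {α} [Fintype α] (D : α → ℝ) {P Q : α → Prop} (h : ∀ a, P a ↔ Q a) :
    pr D P = pr D Q := by
  unfold pr; congr 1; exact Finset.filter_congr fun a _ => h a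

lemma pr_true {α : Type*} [Fintype α] (D : α → ℝ) : pr D (fun _ => True) = ∑ a, D a := by
  unfold pr
  congr 1
  simp

lemma pr_partition {α β : Type*} [Fintype α] [Fintype β] (D : α → ℝ) (P : α → Prop) (F : α → β) :
    ∑ b : β, pr D (fun a => P a ∧ F a = b) = pr D P := by
  unfold pr
  rw [← Finset.sum_fiberwise (Finset.univ.filter P) F D]
  refine Finset.sum_congr rfl fun b _ => ?_
  rw [Finset.filter_filter]
  exact Finset.sum_congr (by congr) fun _ _ => rfl


lemma quart (a x t : ℝ) (ha : 0 ≤ a) (hx : 0 ≤ x) (h : x - t ≤ a) :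
    x ^ 4 - 4 * x ^ 3 * t ≤ a ^ 4 := by
  rcases le_or_gt x t with h1 | h1
  · nlinarith [pow_nonneg ha 4, pow_nonneg hx 3, pow_nonneg hx 4,
      mul_le_mul_of_nonneg_left h1 (pow_nonneg hx 3)]
  · have h0 : (0:ℝ) ≤ x - t := by linarith
    have h2 : (x - t) ^ 4 ≤ a ^ 4 := pow_le_pow_left₀ h0 h 4
    nlinarith [sq_nonneg (t - 2 * x), mul_nonneg (sq_nonneg t) (sq_nonneg (t - 2 * x)),
      mul_nonneg (sq_nonneg t) (sq_nonneg x)]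

lemma choose2' (k : ℕ) : 2 * (k + 2).choose 2 = (k + 2) * (k + 1) := by
  induction k with
  | zero => decide
  | succ k ih =>
    have h : (k + 3).choose 2 = (k + 2).choose 1 + (k + 2).choose 2 := Nat.choose_succ_succ _ _
    simp [Nat.choose_one_right] at h
    have : 2 * (k + 3).choose 2 = 2 * (k + 2) + 2 * (k + 2).choose 2 := by omega
    rw [show k + 1 + 2 = k + 3 by ring, this, ih]; ring

lemma choose3' (k : ℕ) : 6 * (k + 3).choose 3 = (k + 3) * (k + 2) * (k + 1) := by
  induction k with
  | zero => decide
  | succ k ih =>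
    have h : (k + 4).choose 3 = (k + 3).choose 2 + (k + 3).choose 3 := Nat.choose_succ_succ _ _
    have h2 := choose2' (k + 1)
    have : 6 * (k + 4).choose 3 = 3 * (2 * (k + 3).choose 2) + 6 * (k + 3).choose 3 := by omega
    rw [show k+1+3 = k+4 by ring, this, ih]
    rw [show k + 1 + 2 = k + 3 by ring] at h2
    rw [h2]; ring


lemma count_lemma {n m : ℕ} (C : SatInstance n m) : m ≤ distinctCount C + xi C := by
  classical
  set S : Finset (Fin m) := Finset.univ.filter (fun i => ∃ j, j < i ∧ C j = C i) with hS
  have h1 : S.card ≤ xi C := by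
    unfold xi
    apply Finset.card_le_card_of_injOn
      (fun i => ((if h : ∃ j, j < i ∧ C j = C i then h.choose else i), i))
    · intro i hi
      simp only [hS, Finset.mem_coe, Finset.mem_filter, Finset.mem_univ, true_and] at hi
      simp only [Finset.mem_coe, Finset.mem_filter, Finset.mem_univ, true_and]
      rw [dif_pos hi]
      exact ⟨hi.choose_spec.1, hi.choose_spec.2⟩
    · intro a _ b _ hab
      exact congrArg Prod.snd hab
  have h2 : distinctCount C = (Finset.univ \ S).card := by
    unfold distinctCount
    have himg : Finset.univ.image C = (Finset.univ \ S).image C := by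
      apply Finset.Subset.antisymm
      · intro v hv
        simp only [Finset.mem_image] at hv ⊢
        obtain ⟨i, -, rfl⟩ := hv
        set T := Finset.univ.filter (fun j => C j = C i) with hT
        have hTne : T.Nonempty := ⟨i, by simp [hT]⟩
        have hmem : T.min' hTne ∈ T := T.min'_mem hTne
        have hCmin : C (T.min' hTne) = C i := by
          simpa [hT] using hmem
        refine ⟨T.min' hTne, ?_, hCmin⟩
        rw [Finset.mem_sdiff]
        refine ⟨Finset.mem_univ _, fun hmemS => ?_⟩
        rw [hS, Finset.mem_filter] at hmemS
        obtain ⟨-, j', hj', hEq⟩ := hmemS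
        have hj'T : j' ∈ T := by simp [hT, hEq.trans hCmin]
        exact absurd (T.min'_le j' hj'T) (not_le.2 hj')
      · exact Finset.image_subset_image (Finset.sdiff_subset)
    rw [himg]
    apply Finset.card_image_of_injOn
    intro a ha b hb hCab
    rw [Finset.mem_coe] at ha hb
    by_contra hne
    simp only [Finset.mem_sdiff, Finset.mem_univ, true_and, hS, Finset.mem_filter, not_and,
      not_exists] at ha hb
    rcases lt_or_gt_of_ne hne with h | h
    · exact hb a h hCab
    · exact ha b h hCab.symm
  have h3 : (Finset.univ \ S).card = m - S.card := by
    rw [Finset.card_sdiff_of_subset (Finset.subset_univ S)]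
    simp
  have h4 : S.card ≤ m := by
    simpa using Finset.card_le_card (Finset.subset_univ S)
  omega


lemma joint_four {n m : ℕ} (D : SatInstance n m → ℝ) (h4 : KWiseUniform n m 4 D)
    (hm4 : 4 ≤ m) (i j : Fin m) (hij : i ≠ j) :
    ∃ k l : Fin m, k ≠ i ∧ k ≠ j ∧ l ≠ i ∧ l ≠ j ∧ l ≠ k ∧
      ∀ t0 t1 t2 t3 : Clause n,
        pr D (fun C => C i = t0 ∧ C j = t1 ∧ C k = t2 ∧ C l = t3)
          = (1 / (8 * (n.choose 3 : ℝ))) ^ 4 := by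
  classical
  have hcard : 1 < (Finset.univ \ ({i, j} : Finset (Fin m))).card := by
    have h1 : ({i, j} : Finset (Fin m)).card ≤ 2 := by
      apply le_trans (Finset.card_insert_le _ _); simp
    have h2 := Finset.card_sdiff_of_subset (Finset.subset_univ ({i, j} : Finset (Fin m)))
    rw [Finset.card_univ, Fintype.card_fin] at h2
    omega
  obtain ⟨k, hk, l, hl, hkl⟩ := Finset.one_lt_card.1 hcard
  simp only [Finset.mem_sdiff, Finset.mem_univ, true_and, Finset.mem_insert,
    Finset.mem_singleton, not_or] at hk hl
  have hinj : Function.Injective ![i, j, k, l] := by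
    intro a b hab
    fin_cases a <;> fin_cases b <;> simp_all
  refine ⟨k, l, hk.1, hk.2, hl.1, hl.2, fun h => hkl h.symm, fun t0 t1 t2 t3 => ?_⟩
  have h := h4 ![i, j, k, l] hinj ![t0, t1, t2, t3]
  rw [← h]
  apply pr_congr
  intro C
  constructor
  · rintro ⟨e0, e1, e2, e3⟩ jj
    fin_cases jj <;> simpa
  · intro h'
    exact ⟨by simpa using h' 0, by simpa using h' 1, by simpa using h' 2,
      by simpa using h' 3⟩

set_option maxHeartbeats 2000000 in
/-- For all `n ≥ 10`, `1 ≤ m ≤ √10·n^{5/2}` and every `D ∈ 𝔇₄(n,m)`,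
`E_{C∼D}[m̃(C)⁴] ≥ m⁴ − (125/6)·m³·n²`. -/
theorem stmt13 (n m : ℕ) (hn : 10 ≤ n) (hm1 : 1 ≤ m)
    (hm : (m : ℝ) ≤ Real.sqrt 10 * (n : ℝ) ^ ((5 : ℝ) / 2))
    (D : SatInstance n m → ℝ) (hD : IsDistribution D) (h4 : KWiseUniform n m 4 D) :
    (m : ℝ) ^ 4 - (125 / 6) * (m : ℝ) ^ 3 * (n : ℝ) ^ 2
      ≤ ∑ C : SatInstance n m, D C * (distinctCount C : ℝ) ^ 4 := by
  classical
  have hn' : (10 : ℝ) ≤ (n : ℝ) := by exact_mod_cast hn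
  have hRHS : 0 ≤ ∑ C : SatInstance n m, D C * (distinctCount C : ℝ) ^ 4 :=
    Finset.sum_nonneg fun C _ => mul_nonneg (hD.1 C) (by positivity)
  rcases lt_or_ge m 4 with hm4 | hm4
  · have h3 : (m : ℝ) ≤ 3 := by exact_mod_cast Nat.lt_succ_iff.mp hm4
    have hm0 : (1 : ℝ) ≤ (m : ℝ) := by exact_mod_cast hm1
    have hmc : (0 : ℝ) ≤ (m : ℝ) ^ 3 := by positivity
    have hA : (m : ℝ) ^ 4 ≤ 3 * (m : ℝ) ^ 3 := by nlinarith
    have hB : (100 : ℝ) ≤ (n : ℝ) ^ 2 := by nlinarith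
    have hC : 125 / 6 * (m : ℝ) ^ 3 * 100 ≤ 125 / 6 * (m : ℝ) ^ 3 * (n : ℝ) ^ 2 := by nlinarith
    linarith
  · set M : ℝ := 8 * (n.choose 3 : ℝ) with hMdef
    have hchoosepos : 0 < n.choose 3 := Nat.choose_pos (by omega)
    have hMpos : (0 : ℝ) < M := by
      rw [hMdef]
      have : (0 : ℝ) < (n.choose 3 : ℝ) := by exact_mod_cast hchoosepos
      linarith
    set K : ℕ := Fintype.card (Clause n) with hKdef
    -- pairwise probability
    have hpair : ∀ i j : Fin m, i ≠ j →
        pr D (fun C => C i = C j) = (K : ℝ) ^ 3 * (1 / M) ^ 4 := by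
      intro i j hij
      obtain ⟨k, l, hki, hkj, hli, hlj, hlk, hjoint⟩ := joint_four D h4 hm4 i j hij
      have hp := pr_partition D (fun C => C i = C j) (fun C => (C j, C k, C l))
      rw [← hp]
      have each : ∀ b : Clause n × Clause n × Clause n,
          pr D (fun C => C i = C j ∧ (C j, C k, C l) = b) = (1 / M) ^ 4 := by
        rintro ⟨b1, b2, b3⟩
        have hiff : ∀ C : SatInstance n m,
            (C i = C j ∧ (C j, C k, C l) = (b1, b2, b3)) ↔
            (C i = b1 ∧ C j = b1 ∧ C k = b2 ∧ C l = b3) := by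
          intro C
          constructor
          · rintro ⟨he, hb⟩
            simp only [Prod.mk.injEq] at hb
            exact ⟨he.trans hb.1, hb.1, hb.2.1, hb.2.2⟩
          · rintro ⟨e1, e2, e3, e4⟩
            exact ⟨e1.trans e2.symm, by simp [e2, e3, e4]⟩
        rw [pr_congr D hiff, hMdef]
        exact hjoint b1 b1 b2 b3
      rw [Finset.sum_congr rfl fun b _ => each b, Finset.sum_const, Finset.card_univ]
      simp only [Fintype.card_prod, ← hKdef, nsmul_eq_mul]
      push_cast
      ring
    -- total probability
    have htot : (K : ℝ) ^ 4 * (1 / M) ^ 4 = 1 := by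
      have hij : (⟨0, by omega⟩ : Fin m) ≠ ⟨1, by omega⟩ := by
        intro h
        exact absurd (congrArg Fin.val h) (by simp)
      obtain ⟨k, l, hki, hkj, hli, hlj, hlk, hjoint⟩ :=
        joint_four D h4 hm4 ⟨0, by omega⟩ ⟨1, by omega⟩ hij
      have hp := pr_partition D (fun _ => True)
        (fun C => (C ⟨0, by omega⟩, C ⟨1, by omega⟩, C k, C l))
      have hone : pr D (fun _ : SatInstance n m => True) = 1 := by
        rw [pr_true]
        exact hD.2
      rw [hone] at hp
      have each : ∀ b : Clause n × Clause n × Clause n × Clause n,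
          pr D (fun C => True ∧ (C ⟨0, by omega⟩, C ⟨1, by omega⟩, C k, C l) = b)
            = (1 / M) ^ 4 := by
        rintro ⟨b1, b2, b3, b4⟩
        have hiff : ∀ C : SatInstance n m,
            (True ∧ (C ⟨0, by omega⟩, C ⟨1, by omega⟩, C k, C l) = (b1, b2, b3, b4)) ↔
            (C ⟨0, by omega⟩ = b1 ∧ C ⟨1, by omega⟩ = b2 ∧ C k = b3 ∧ C l = b4) := by
          intro C
          constructor
          · rintro ⟨-, hb⟩
            simp only [Prod.mk.injEq] at hb
            exact ⟨hb.1, hb.2.1, hb.2.2.1, hb.2.2.2⟩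
          · rintro ⟨e1, e2, e3, e4⟩
            exact ⟨trivial, by simp [e1, e2, e3, e4]⟩
        rw [pr_congr D hiff, hMdef]
        exact hjoint b1 b2 b3 b4
      rw [Finset.sum_congr rfl fun b _ => each b, Finset.sum_const, Finset.card_univ] at hp
      simp only [Fintype.card_prod, ← hKdef, nsmul_eq_mul] at hp
      have hcast : ((K * (K * (K * K)) : ℕ) : ℝ) = (K : ℝ) ^ 4 := by push_cast; ring
      rw [hcast] at hp
      exact hp
    -- K = M
    have hKM : (K : ℝ) = M := by
      have hx4 : ((K : ℝ) * (1 / M)) ^ 4 = 1 := by rw [mul_pow]; exact htot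
      have hx0 : (0 : ℝ) ≤ (K : ℝ) * (1 / M) := by positivity
      have hx1 : (K : ℝ) * (1 / M) = 1 := by
        set x : ℝ := (K : ℝ) * (1 / M) with hxdef
        rcases lt_trichotomy x 1 with h | h | h
        · have h1 : x ^ 4 < 1 ^ 4 := by
            apply pow_lt_pow_left₀ h hx0
            norm_num
          simp at h1
          linarith
        · exact h
        · have h1 : (1:ℝ) ^ 4 < x ^ 4 := by
            apply pow_lt_pow_left₀ h (by norm_num)
            norm_num
          simp at h1
          linarith
      field_simp at hx1
      exact hx1
    have hval : (K : ℝ) ^ 3 * (1 / M) ^ 4 = 1 / M := by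
      rw [hKM]
      field_simp
    -- expectation of xi
    set c : ℕ := (Finset.univ.filter (fun p : Fin m × Fin m => p.1 < p.2)).card with hcdef
    have hxi_sum : ∑ C : SatInstance n m, D C * (xi C : ℝ) = (c : ℝ) * (1 / M) := by
      have step1 : ∀ C : SatInstance n m, (xi C : ℝ)
          = ∑ p : Fin m × Fin m, (if p.1 < p.2 ∧ C p.1 = C p.2 then (1 : ℝ) else 0) := by
        intro C
        unfold xi
        rw [Finset.card_filter]
        push_cast
        exact Finset.sum_congr rfl fun p _ => by split <;> simp
      calc ∑ C : SatInstance n m, D C * (xi C : ℝ)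
          = ∑ C : SatInstance n m, ∑ p : Fin m × Fin m,
              (if p.1 < p.2 ∧ C p.1 = C p.2 then D C else 0) := by
            refine Finset.sum_congr rfl fun C _ => ?_
            rw [step1, Finset.mul_sum]
            exact Finset.sum_congr rfl fun p _ => by rw [mul_ite, mul_one, mul_zero]
        _ = ∑ p : Fin m × Fin m, ∑ C : SatInstance n m,
              (if p.1 < p.2 ∧ C p.1 = C p.2 then D C else 0) := Finset.sum_comm
        _ = ∑ p : Fin m × Fin m, (if p.1 < p.2 then (1 / M : ℝ) else 0) := by
            refine Finset.sum_congr rfl fun p _ => ?_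
            by_cases hp : p.1 < p.2
            · rw [if_pos hp]
              have hpr : ∑ C : SatInstance n m,
                  (if p.1 < p.2 ∧ C p.1 = C p.2 then D C else 0)
                  = pr D (fun C => C p.1 = C p.2) := by
                rw [pr, Finset.sum_filter]
                exact Finset.sum_congr rfl fun C _ => by simp [hp]
              rw [hpr, hpair p.1 p.2 (ne_of_lt hp), hval]
            · rw [if_neg hp]
              exact Finset.sum_eq_zero fun C _ => by rw [if_neg (by tauto)]
        _ = (c : ℝ) * (1 / M) := by
            rw [← Finset.sum_filter, Finset.sum_const, nsmul_eq_mul]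
    -- counting pairs
    have hc : 2 * (c : ℝ) ≤ (m : ℝ) ^ 2 := by
      have hcard : 2 * c ≤ m * m := by
        set A := Finset.univ.filter (fun p : Fin m × Fin m => p.1 < p.2) with hA
        set B := Finset.univ.filter (fun p : Fin m × Fin m => p.2 < p.1) with hB
        have hAB : A.card = B.card := by
          apply Finset.card_bij' (fun p _ => Prod.swap p) (fun p _ => Prod.swap p)
          · intro p hp
            simp only [hA, Finset.mem_filter, Finset.mem_univ, true_and] at hp
            simp [hB, hp]
          · intro p hp
            simp only [hB, Finset.mem_filter, Finset.mem_univ, true_and] at hp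
            simp [hA, hp]
          · intro p _; exact Prod.swap_swap p
          · intro p _; exact Prod.swap_swap p
        have hdisj : Disjoint A B := by
          rw [Finset.disjoint_left]
          intro p hp hq
          simp only [hA, hB, Finset.mem_filter, Finset.mem_univ, true_and] at hp hq
          exact absurd (hp.trans hq) (lt_irrefl _)
        have hun : (A ∪ B).card = A.card + B.card := Finset.card_union_of_disjoint hdisj
        have hle : (A ∪ B).card ≤ m * m := by
          have := Finset.card_le_card (Finset.subset_univ (A ∪ B))
          simpa [Finset.card_univ] using this
        omega
      calc 2 * (c : ℝ) = ((2 * c : ℕ) : ℝ) := by push_cast; ring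
        _ ≤ ((m * m : ℕ) : ℝ) := by exact_mod_cast hcard
        _ = (m : ℝ) ^ 2 := by push_cast; ring
    -- m² ≤ 10 n⁵
    have hm2 : (m : ℝ) ^ 2 ≤ 10 * (n : ℝ) ^ 5 := by
      have hnn : (0 : ℝ) < (n : ℝ) := by linarith
      have hsq := mul_self_le_mul_self (Nat.cast_nonneg m) hm
      have h10 : Real.sqrt 10 * Real.sqrt 10 = 10 := Real.mul_self_sqrt (by norm_num)
      have hpow : (n : ℝ) ^ ((5 : ℝ) / 2) * (n : ℝ) ^ ((5 : ℝ) / 2) = (n : ℝ) ^ 5 := by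
        rw [← Real.rpow_add hnn]
        norm_num
      calc (m : ℝ) ^ 2 = (m : ℝ) * (m : ℝ) := sq (m : ℝ) ▸ by ring
        _ ≤ (Real.sqrt 10 * (n : ℝ) ^ ((5 : ℝ) / 2)) * (Real.sqrt 10 * (n : ℝ) ^ ((5 : ℝ) / 2)) := hsq
        _ = (Real.sqrt 10 * Real.sqrt 10) * ((n : ℝ) ^ ((5 : ℝ) / 2) * (n : ℝ) ^ ((5 : ℝ) / 2)) := by ring
        _ = 10 * (n : ℝ) ^ 5 := by rw [h10, hpow]
    -- choose identity
    have hchoose : 6 * ((n.choose 3 : ℕ) : ℝ) = (n : ℝ) * ((n : ℝ) - 1) * ((n : ℝ) - 2) := by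
      obtain ⟨k, hk⟩ := Nat.exists_eq_add_of_le (show 3 ≤ n by omega)
      have hn3 : n = k + 3 := by omega
      rw [hn3]
      have h' : ((6 * (k + 3).choose 3 : ℕ) : ℝ) = (((k + 3) * (k + 2) * (k + 1) : ℕ) : ℝ) := by
        exact_mod_cast congrArg (Nat.cast (R := ℝ)) (choose3' k)
      push_cast at h' ⊢
      linarith
    -- key bound
    have hKey : 4 * (m : ℝ) ^ 3 * ((c : ℝ) * (1 / M)) ≤ 125 / 6 * (m : ℝ) ^ 3 * (n : ℝ) ^ 2 := by
      have hcM : (c : ℝ) * (1 / M) ≤ 125 / 24 * (n : ℝ) ^ 2 := by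
        rw [mul_one_div, div_le_iff₀ hMpos]
        have h720 : 720 * (n : ℝ) ^ 5 ≤
            1000 * (n : ℝ) ^ 2 * ((n : ℝ) * ((n : ℝ) - 1) * ((n : ℝ) - 2)) := by
          have e : 1000 * (n : ℝ) ^ 2 * ((n : ℝ) * ((n : ℝ) - 1) * ((n : ℝ) - 2))
              - 720 * (n : ℝ) ^ 5
              = 280 * (n : ℝ) ^ 3 * ((n : ℝ) - 10) * ((n : ℝ) - 5 / 7) := by ring
          linarith [e, mul_nonneg (mul_nonneg (by positivity : (0:ℝ) ≤ 280 * (n : ℝ) ^ 3)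
            (by linarith : (0:ℝ) ≤ (n : ℝ) - 10)) (by linarith : (0:ℝ) ≤ (n : ℝ) - 5 / 7)]
        have hMP : (n : ℝ) ^ 2 * M
            = (4 / 3) * ((n : ℝ) ^ 2 * ((n : ℝ) * ((n : ℝ) - 1) * ((n : ℝ) - 2))) := by
          rw [hMdef]
          linear_combination ((4 : ℝ) / 3) * (n : ℝ) ^ 2 * hchoose
        linarith [hc, hm2, h720, hMP]
      have h4m : (0 : ℝ) ≤ 4 * (m : ℝ) ^ 3 := by positivity
      calc 4 * (m : ℝ) ^ 3 * ((c : ℝ) * (1 / M))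
          ≤ 4 * (m : ℝ) ^ 3 * (125 / 24 * (n : ℝ) ^ 2) := by
            exact mul_le_mul_of_nonneg_left hcM h4m
        _ = 125 / 6 * (m : ℝ) ^ 3 * (n : ℝ) ^ 2 := by ring
    -- pointwise bound and assembly
    have hpoint : ∀ C : SatInstance n m,
        D C * ((m : ℝ) ^ 4 - 4 * (m : ℝ) ^ 3 * (xi C : ℝ))
          ≤ D C * (distinctCount C : ℝ) ^ 4 := by
      intro C
      refine mul_le_mul_of_nonneg_left ?_ (hD.1 C)
      refine quart _ _ _ (Nat.cast_nonneg _) (Nat.cast_nonneg _) ?_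
      have h := count_lemma C
      have h' : (m : ℝ) ≤ (distinctCount C : ℝ) + (xi C : ℝ) := by exact_mod_cast h
      linarith
    have hsum : ∑ C : SatInstance n m, D C * ((m : ℝ) ^ 4 - 4 * (m : ℝ) ^ 3 * (xi C : ℝ))
        = (m : ℝ) ^ 4 - 4 * (m : ℝ) ^ 3 * ((c : ℝ) * (1 / M)) := by
      have hexp : ∑ C : SatInstance n m, D C * ((m : ℝ) ^ 4 - 4 * (m : ℝ) ^ 3 * (xi C : ℝ))
          = (m : ℝ) ^ 4 * ∑ C : SatInstance n m, D C
            - 4 * (m : ℝ) ^ 3 * ∑ C : SatInstance n m, D C * (xi C : ℝ) := by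
        rw [Finset.mul_sum, Finset.mul_sum, ← Finset.sum_sub_distrib]
        exact Finset.sum_congr rfl fun C _ => by ring
      rw [hexp, hD.2, hxi_sum]
      ring
    have hle : ∑ C : SatInstance n m, D C * ((m : ℝ) ^ 4 - 4 * (m : ℝ) ^ 3 * (xi C : ℝ))
        ≤ ∑ C : SatInstance n m, D C * (distinctCount C : ℝ) ^ 4 :=
      Finset.sum_le_sum fun C _ => hpoint C
    rw [hsum] at hle
    linarith
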